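/- For ρ ≥ 0 and z1, z2 ∈ [0,1] with z1·z2 < 1, one has g(ρ, (z1+z2)/(1+z1·z2)) ≤ g(ρ, (z1-z2)/(1-z1·z2)), where g(ρ, z) = g(ρ, |z|) for negative arguments. -/

import Mathlib

open Real Set

noncomputable def g (ρ z : ℝ) : ℝ :=
  ((1/2) * (1 + z) ^ (1/(1+ρ)) + (1/2) * (1 - z) ^ (1/(1+ρ))) ^ (1+ρ)

lemma phi_anti {p : ℝ} (hp : 0 < p) (hp1 : p ≤ 1) :
    AntitoneOn (fun z : ℝ => (1 + z) ^ p + (1 - z) ^ p) (Icc 0 1) := by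
  have hderiv : ∀ x ∈ interior (Icc (0:ℝ) 1),
      HasDerivWithinAt (fun z : ℝ => (1 + z) ^ p + (1 - z) ^ p)
        (p * (1 + x) ^ (p - 1) * 1 + p * (1 - x) ^ (p - 1) * (-1)) (interior (Icc 0 1)) x := by
    intro x hx
    rw [interior_Icc] at hx
    have h1 : (0:ℝ) < 1 + x := by linarith [hx.1]
    have h2 : (0:ℝ) < 1 - x := by linarith [hx.2]
    have d1 : HasDerivAt (fun z : ℝ => (1 + z) ^ p) (p * (1 + x) ^ (p - 1) * 1) x := by
      have := (Real.hasDerivAt_rpow_const (p := p) (x := 1 + x) (Or.inl h1.ne')).comp x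
        ((hasDerivAt_const x (1:ℝ)).add (hasDerivAt_id x))
      simpa [Function.comp_def] using this
    have d2 : HasDerivAt (fun z : ℝ => (1 - z) ^ p) (p * (1 - x) ^ (p - 1) * (-1)) x := by
      have := (Real.hasDerivAt_rpow_const (p := p) (x := 1 - x) (Or.inl h2.ne')).comp x
        ((hasDerivAt_const x (1:ℝ)).sub (hasDerivAt_id x))
      simpa [Function.comp_def] using this
    exact ((d1.add d2).hasDerivWithinAt)
  refine antitoneOn_of_hasDerivWithinAt_nonpos (convex_Icc 0 1) ?_ hderiv ?_
  · refine ContinuousOn.add ?_ ?_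
    · exact (ContinuousOn.add continuousOn_const continuousOn_id).rpow_const
        (fun x _ => Or.inr hp.le)
    · exact (ContinuousOn.sub continuousOn_const continuousOn_id).rpow_const
        (fun x _ => Or.inr hp.le)
  · intro x hx
    rw [interior_Icc] at hx
    have h1 : (0:ℝ) < 1 + x := by linarith [hx.1]
    have h2 : (0:ℝ) < 1 - x := by linarith [hx.2]
    have hle : (1 + x) ^ (p - 1) ≤ (1 - x) ^ (p - 1) :=
      Real.rpow_le_rpow_of_nonpos h2 (by linarith [hx.1]) (by linarith)
    nlinarith

theorem g_plus_le_g_minus (ρ : ℝ) (hρ : 0 ≤ ρ) (z1 z2 : ℝ)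
    (h1 : z1 ∈ Set.Icc (0:ℝ) 1) (h2 : z2 ∈ Set.Icc (0:ℝ) 1) (hlt : z1 * z2 < 1) :
    g ρ ((z1 + z2)/(1 + z1 * z2)) ≤ g ρ (|z1 - z2|/(1 - z1 * z2)) := by
  obtain ⟨h10, h11⟩ := h1
  obtain ⟨h20, h21⟩ := h2
  have hden1 : (0:ℝ) < 1 + z1 * z2 := by nlinarith
  have hden2 : (0:ℝ) < 1 - z1 * z2 := by linarith
  set a := (z1 + z2)/(1 + z1 * z2) with ha
  set b := |z1 - z2|/(1 - z1 * z2) with hb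
  have habs : |z1 - z2| * (1 + z1 * z2) ≤ (z1 + z2) * (1 - z1 * z2) := by
    rcases abs_cases (z1 - z2) with ⟨h, _⟩ | ⟨h, _⟩ <;> rw [h]
    · nlinarith [mul_nonneg (mul_nonneg h20 (sub_nonneg.2 h11))
        (show (0:ℝ) ≤ 1 + z1 by linarith)]
    · nlinarith [mul_nonneg (mul_nonneg h10 (sub_nonneg.2 h21))
        (show (0:ℝ) ≤ 1 + z2 by linarith)]
  have hba : b ≤ a := by
    rw [ha, hb, div_le_div_iff₀ hden2 hden1]
    exact habs
  have ha1 : a ≤ 1 := by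
    rw [ha, div_le_one hden1]; nlinarith
  have hb0 : 0 ≤ b := div_nonneg (abs_nonneg _) hden2.le
  have ha0 : 0 ≤ a := le_trans hb0 hba
  have hbmem : b ∈ Icc (0:ℝ) 1 := ⟨hb0, le_trans hba ha1⟩
  have hamem : a ∈ Icc (0:ℝ) 1 := ⟨ha0, ha1⟩
  have hp : 0 < 1/(1+ρ) := by positivity
  have hp1 : 1/(1+ρ) ≤ 1 := by
    rw [div_le_one (by linarith)]; linarith
  have key := phi_anti hp hp1 hbmem hamem hba
  simp only at key
  unfold g
  apply Real.rpow_le_rpow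
  · have : (0:ℝ) ≤ (1 + a) ^ (1/(1+ρ)) := Real.rpow_nonneg (by linarith [hamem.2]) _
    have : (0:ℝ) ≤ (1 - a) ^ (1/(1+ρ)) := Real.rpow_nonneg (by linarith [hamem.2]) _
    nlinarith [Real.rpow_nonneg (show (0:ℝ) ≤ 1 + a by linarith [hamem.1]) (1/(1+ρ))]
  · linarith
  · linarith
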